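/- Let c > 0, 0 ≤ m < 1, β > 1 − m and set a := β + m − 1. Define u_c(z) := (c z + 2) u₀(z) / ( c (c² e^{c z} + a) ) and w_c(z) := −z e^{−c z} u₀(z)^β + β e^{−c z} u₀(z)^{β−1} u_c(z), where u₀(z) = (1 + (a/c²) e^{−c z})^{−1/a}. Then both u_c and w_c belong to L²(ℝ); i.e., the generalised eigenfunction (u_c, w_c) at λ = 0 is square-integrable when the consumption is constant or sublinear. -/

import Mathlib

set_option maxHeartbeats 1000000


open Real Filter MeasureTheory

lemma aux_integrable_exp_neg_abs {b : ℝ} (hb : 0 < b) :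
    Integrable (fun x : ℝ => Real.exp (-b * |x|)) := by
  have h1 : IntegrableOn (fun x : ℝ => Real.exp (-b * |x|)) (Set.Ioi 0) := by
    refine (exp_neg_integrableOn_Ioi 0 hb).congr_fun ?_ measurableSet_Ioi
    intro x hx
    simp only []
    rw [abs_of_pos hx]
  have h1' : Integrable ((Set.Ioi (0:ℝ)).indicator fun x => Real.exp (-b * |x|)) := by
    rwa [integrable_indicator_iff measurableSet_Ioi]
  have h2 := h1'.comp_neg
  have key : (fun x : ℝ => (Set.Ioi (0:ℝ)).indicator (fun x => Real.exp (-b * |x|)) x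
      + (Set.Ioi (0:ℝ)).indicator (fun x => Real.exp (-b * |x|)) (-x))
      =ᵐ[volume] fun x : ℝ => Real.exp (-b * |x|) := by
    filter_upwards [compl_mem_ae_iff.2 (volume_singleton (a := (0:ℝ)))] with x hx
    simp only [Set.mem_compl_iff, Set.mem_singleton_iff] at hx
    rcases lt_or_gt_of_ne hx with h | h
    · rw [Set.indicator_of_notMem (by simpa using h.le), Set.indicator_of_mem (by simpa using h),
        abs_neg, zero_add]
    · rw [Set.indicator_of_mem (by simpa using h), Set.indicator_of_notMem (by simp [h.le]),
        add_zero]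
  exact (h1'.add h2).congr key

lemma aux_memL2 {f : ℝ → ℝ} (hf : Continuous f) {C b : ℝ} (hb : 0 < b)
    (hbd : ∀ x, |f x| ≤ C * Real.exp (-b * |x|)) : MemLp f 2 (volume : Measure ℝ) := by
  refine (memLp_two_iff_integrable_sq hf.aestronglyMeasurable).2 ?_
  have hint : Integrable (fun x : ℝ => C ^ 2 * Real.exp (-(2 * b) * |x|)) :=
    (aux_integrable_exp_neg_abs (by linarith)).const_mul _
  refine hint.mono' (hf.pow 2).aestronglyMeasurable ?_
  refine Filter.Eventually.of_forall fun x => ?_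
  have h1 : |f x| ≤ C * Real.exp (-b * |x|) := hbd x
  have h2 : ‖f x ^ 2‖ = |f x| ^ 2 := by
    rw [Real.norm_eq_abs, abs_pow]
  rw [h2]
  calc |f x| ^ 2 ≤ (C * Real.exp (-b * |x|)) ^ 2 := by
        exact pow_le_pow_left₀ (abs_nonneg _) h1 2
    _ = C ^ 2 * Real.exp (-(2 * b) * |x|) := by
        rw [mul_pow, sq (Real.exp _), ← Real.exp_add]
        ring_nf

/-- `t ≤ s⁻¹ * exp (s * t)` for `s > 0`. -/
lemma aux_le_exp {s t : ℝ} (hs : 0 < s) : t ≤ s⁻¹ * Real.exp (s * t) := by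
  rw [inv_mul_eq_div, le_div_iff₀ hs]
  nlinarith [Real.add_one_le_exp (s * t)]

theorem stmt_10 (c m β : ℝ) (hc : 0 < c) (hm0 : 0 ≤ m) (hm1 : m < 1) (hβ : β > 1 - m)
    (a : ℝ) (ha : a = β + m - 1)
    (u₀ uc wc : ℝ → ℝ)
    (hu : ∀ z : ℝ, u₀ z = (1 + (a / c ^ 2) * Real.exp (-c * z)) ^ (-(1 / a)))
    (huc : ∀ z : ℝ, uc z = (c * z + 2) * u₀ z / (c * (c ^ 2 * Real.exp (c * z) + a)))
    (hwc : ∀ z : ℝ, wc z = -z * Real.exp (-c * z) * u₀ z ^ β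
        + β * Real.exp (-c * z) * u₀ z ^ (β - 1) * uc z) :
    MemLp uc 2 (volume : Measure ℝ) ∧ MemLp wc 2 (volume : Measure ℝ) := by
  have ha' : 0 < a := by rw [ha]; linarith
  have h1m : 0 < 1 - m := by linarith
  have hβ0 : 0 < β := by linarith
  set s : ℝ := c * (1 - m) / (2 * a) with hs
  have hspos : 0 < s := by positivity
  set δ : ℝ := min (c / 2) s with hδ
  have hδpos : 0 < δ := lt_min (by positivity) hspos
  have hδc2 : δ ≤ c / 2 := min_le_left _ _
  have hδs : δ ≤ s := min_le_right _ _
  set K : ℝ := (a / c ^ 2) ^ (-(1 / a)) with hKdef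
  have hK : 0 < K := Real.rpow_pos_of_pos (by positivity) _
  -- pointwise facts about u₀
  have hBpos : ∀ z : ℝ, 0 < 1 + (a / c ^ 2) * Real.exp (-c * z) := fun z => by positivity
  have hu0pos : ∀ z : ℝ, 0 < u₀ z := fun z => by
    rw [hu]; exact Real.rpow_pos_of_pos (hBpos z) _
  have hu0le1 : ∀ z : ℝ, u₀ z ≤ 1 := fun z => by
    rw [hu]
    exact Real.rpow_le_one_of_one_le_of_nonpos (le_add_of_nonneg_right (by positivity))
      (neg_nonpos.2 (by positivity))
  have hu0leK : ∀ z : ℝ, u₀ z ≤ K * Real.exp (c * z / a) := fun z => by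
    rw [hu]
    have h1 : (a / c ^ 2) * Real.exp (-c * z)
        ≤ 1 + (a / c ^ 2) * Real.exp (-c * z) := by linarith
    have h2 := Real.rpow_le_rpow_of_nonpos (by positivity) h1 (neg_nonpos.2 (by positivity : (0:ℝ) ≤ 1/a))
    refine h2.trans_eq ?_
    rw [Real.mul_rpow (by positivity) (Real.exp_pos _).le, ← hKdef, ← Real.exp_mul]
    congr 1
    field_simp
  -- denominator bounds
  have hDpos : ∀ z : ℝ, 0 < c * (c ^ 2 * Real.exp (c * z) + a) := fun z => by positivity
  have hD1 : ∀ z : ℝ, 0 ≤ z → c ^ 3 ≤ c * (c ^ 2 * Real.exp (c * z) + a) := fun z hz => by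
    have h1 : (1:ℝ) ≤ Real.exp (c * z) := Real.one_le_exp (by positivity)
    nlinarith [mul_pos hc ha', mul_le_mul_of_nonneg_left h1 (pow_pos hc 3).le]
  have hD2 : ∀ z : ℝ, c * a ≤ c * (c ^ 2 * Real.exp (c * z) + a) := fun z => by
    nlinarith [mul_pos (pow_pos hc 3) (Real.exp_pos (c * z))]
  -- linear growth bounds
  have hlin1 : ∀ z : ℝ, 0 ≤ z → c * z + 2 ≤ 2 * Real.exp (c / 2 * z) := fun z hz => by
    nlinarith [Real.add_one_le_exp (c / 2 * z)]
  have hlin2 : ∀ z : ℝ, z < 0 → |c * z + 2| ≤ (2 + c / s) * Real.exp (s * (-z)) := fun z hz => by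
    have h1 : (1:ℝ) ≤ Real.exp (s * (-z)) := Real.one_le_exp (by nlinarith)
    have h2 : -z ≤ s⁻¹ * Real.exp (s * (-z)) := aux_le_exp hspos
    have h3 : -(c * z) ≤ (c / s) * Real.exp (s * (-z)) := by
      rw [div_eq_mul_inv, mul_assoc]
      nlinarith
    rw [abs_le]
    constructor <;> nlinarith [Real.exp_pos (s * (-z))]
  -- bound for uc
  set C₁ : ℝ := max (2 / c ^ 3) ((2 + c / s) * K / (c * a)) with hC₁
  have hucb : ∀ z : ℝ, |uc z| ≤ C₁ * Real.exp (-δ * |z|) := by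
    intro z
    rcases le_or_gt 0 z with hz | hz
    · have hN : 0 ≤ (c * z + 2) * u₀ z :=
        mul_nonneg (by nlinarith) (hu0pos z).le
      have habs : |uc z| = (c * z + 2) * u₀ z / (c * (c ^ 2 * Real.exp (c * z) + a)) := by
        rw [huc, abs_of_nonneg (div_nonneg hN (hDpos z).le)]
      rw [habs]
      have hnum : (c * z + 2) * u₀ z ≤ 2 * Real.exp (c / 2 * z) := by
        calc (c * z + 2) * u₀ z ≤ (c * z + 2) * 1 :=
              mul_le_mul_of_nonneg_left (hu0le1 z) (by nlinarith)
          _ = c * z + 2 := mul_one _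
          _ ≤ 2 * Real.exp (c / 2 * z) := hlin1 z hz
      calc (c * z + 2) * u₀ z / (c * (c ^ 2 * Real.exp (c * z) + a))
          ≤ 2 * Real.exp (c / 2 * z) / (c ^ 3 * Real.exp (c * z)) := by
            refine div_le_div₀ (by positivity) hnum (by positivity) ?_
            have h1 : (1:ℝ) ≤ Real.exp (c * z) := Real.one_le_exp (by positivity)
            nlinarith [Real.exp_pos (c * z)]
        _ = (2 / c ^ 3) * (Real.exp (c / 2 * z) / Real.exp (c * z)) := mul_div_mul_comm _ _ _ _
        _ = (2 / c ^ 3) * Real.exp (-(c / 2) * z) := by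
            rw [← Real.exp_sub]; ring_nf
        _ ≤ (2 / c ^ 3) * Real.exp (-δ * |z|) := by
            refine mul_le_mul_of_nonneg_left (Real.exp_le_exp.2 ?_) (by positivity)
            rw [abs_of_nonneg hz]; nlinarith
        _ ≤ C₁ * Real.exp (-δ * |z|) :=
            mul_le_mul_of_nonneg_right (le_max_left _ _) (Real.exp_pos _).le
    · have habs : |uc z| = |c * z + 2| * u₀ z / (c * (c ^ 2 * Real.exp (c * z) + a)) := by
        rw [huc, abs_div, abs_of_pos (hDpos z), abs_mul, abs_of_pos (hu0pos z)]
      rw [habs]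
      have hnum : |c * z + 2| * u₀ z
          ≤ ((2 + c / s) * Real.exp (s * (-z))) * (K * Real.exp (c * z / a)) :=
        mul_le_mul (hlin2 z hz) (hu0leK z) (hu0pos z).le (by positivity)
      calc |c * z + 2| * u₀ z / (c * (c ^ 2 * Real.exp (c * z) + a))
          ≤ ((2 + c / s) * Real.exp (s * (-z))) * (K * Real.exp (c * z / a)) / (c * a) := by
            refine div_le_div₀ (by positivity) hnum (by positivity) (hD2 z)
        _ = ((2 + c / s) * K / (c * a)) * Real.exp (s * (-z) + c * z / a) := by
            rw [Real.exp_add]; ring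
        _ ≤ ((2 + c / s) * K / (c * a)) * Real.exp (-δ * |z|) := by
            refine mul_le_mul_of_nonneg_left (Real.exp_le_exp.2 ?_) (by positivity)
            rw [abs_of_neg hz]
            -- need : s * (-z) + c * z / a ≤ -δ * (-z) = δ * z
            have h2 : 2 * s ≤ c / a := by
              rw [show 2 * s = c * (1 - m) / a by rw [hs]; field_simp]
              refine (div_le_div_iff_of_pos_right ha').2 ?_
              nlinarith
            have hz' : z ≤ 0 := hz.le
            have m1 : (c / a) * z ≤ (2 * s) * z := mul_le_mul_of_nonpos_right h2 hz'
            have m2 : s * z ≤ δ * z := mul_le_mul_of_nonpos_right hδs hz'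
            have hca : c * z / a = (c / a) * z := by ring
            linarith [hca.le, hca.ge]
        _ ≤ C₁ * Real.exp (-δ * |z|) :=
            mul_le_mul_of_nonneg_right (le_max_right _ _) (Real.exp_pos _).le
  -- continuity
  have hu0cont : Continuous u₀ := by
    have : u₀ = fun z => (1 + (a / c ^ 2) * Real.exp (-c * z)) ^ (-(1 / a)) := funext hu
    rw [this]
    exact Continuous.rpow_const (continuous_const.add (continuous_const.mul
      (Real.continuous_exp.comp (continuous_const.mul continuous_id))))
      fun z => Or.inl (hBpos z).ne'
  have huccont : Continuous uc := by
    have : uc = fun z => (c * z + 2) * u₀ z / (c * (c ^ 2 * Real.exp (c * z) + a)) := funext huc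
    rw [this]
    refine Continuous.div ?_ ?_ fun z => (hDpos z).ne'
    · exact (continuous_const.mul continuous_id |>.add continuous_const).mul hu0cont
    · exact continuous_const.mul ((continuous_const.mul
        (Real.continuous_exp.comp (continuous_const.mul continuous_id))).add continuous_const)
  -- `Q z := exp (-c*z) * u₀ z ^ β` bounds
  have hQpos : ∀ z : ℝ, 0 < Real.exp (-c * z) * u₀ z ^ β := fun z =>
    mul_pos (Real.exp_pos _) (Real.rpow_pos_of_pos (hu0pos z) β)
  have hQ1 : ∀ z : ℝ, 0 ≤ z → Real.exp (-c * z) * u₀ z ^ β ≤ Real.exp (-c * z) := fun z hz => by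
    have := Real.rpow_le_one (hu0pos z).le (hu0le1 z) hβ0.le
    nlinarith [Real.exp_pos (-c * z)]
  have hQ2 : ∀ z : ℝ, Real.exp (-c * z) * u₀ z ^ β ≤ K ^ β * Real.exp (2 * s * z) := fun z => by
    have h1 : u₀ z ^ β ≤ (K * Real.exp (c * z / a)) ^ β :=
      Real.rpow_le_rpow (hu0pos z).le (hu0leK z) hβ0.le
    have h2 : (K * Real.exp (c * z / a)) ^ β = K ^ β * Real.exp (c * z / a * β) := by
      rw [Real.mul_rpow hK.le (Real.exp_pos _).le, ← Real.exp_mul]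
    have h3 : Real.exp (-c * z) * (K ^ β * Real.exp (c * z / a * β))
        = K ^ β * Real.exp (2 * s * z) := by
      rw [mul_comm (Real.exp (-c*z)) _, mul_assoc, ← Real.exp_add]
      congr 2
      rw [hs]
      have haz : a ≠ 0 := ha'.ne'
      field_simp
      linear_combination (-z) * ha
    calc Real.exp (-c * z) * u₀ z ^ β
        ≤ Real.exp (-c * z) * (K ^ β * Real.exp (c * z / a * β)) := by
          rw [← h2]; exact mul_le_mul_of_nonneg_left h1 (Real.exp_pos _).le
      _ = K ^ β * Real.exp (2 * s * z) := h3
  have hKβ : 0 < K ^ β := Real.rpow_pos_of_pos hK β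
  -- rewrite wc
  have hwc2 : ∀ z : ℝ, wc z = -z * (Real.exp (-c * z) * u₀ z ^ β)
      + β * (c * z + 2) * (Real.exp (-c * z) * u₀ z ^ β)
        / (c * (c ^ 2 * Real.exp (c * z) + a)) := by
    intro z
    have hpow : u₀ z ^ (β - 1) * u₀ z = u₀ z ^ β := by
      rw [← Real.rpow_add_one (hu0pos z).ne' (β - 1)]
      ring_nf
    rw [hwc, huc, ← hpow]
    ring
  -- bound for wc
  set C₂ : ℝ := max (2 / c + 2 * β / c ^ 3)
      (K ^ β / s + (2 + c / s) * β * K ^ β / (c * a)) with hC₂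
  have hwcb : ∀ z : ℝ, |wc z| ≤ C₂ * Real.exp (-δ * |z|) := by
    intro z
    set Q : ℝ := Real.exp (-c * z) * u₀ z ^ β with hQ
    have hQz : 0 < Q := hQpos z
    have e1 : |(-z) * Q| = |z| * Q := by
      rw [abs_mul, abs_neg, abs_of_pos hQz]
    have e2 : |β * (c * z + 2) * Q / (c * (c ^ 2 * Real.exp (c * z) + a))|
        = β * |c * z + 2| * Q / (c * (c ^ 2 * Real.exp (c * z) + a)) := by
      rw [abs_div, abs_mul, abs_mul, abs_of_pos hβ0, abs_of_pos hQz, abs_of_pos (hDpos z)]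
    have htri : |wc z| ≤ |z| * Q
        + β * |c * z + 2| * Q / (c * (c ^ 2 * Real.exp (c * z) + a)) := by
      calc |wc z| = |(-z) * Q + β * (c * z + 2) * Q / (c * (c ^ 2 * Real.exp (c * z) + a))| := by
            rw [hwc2 z]
        _ ≤ |(-z) * Q| + |β * (c * z + 2) * Q / (c * (c ^ 2 * Real.exp (c * z) + a))| :=
            abs_add_le _ _
        _ = _ := by rw [e1, e2]
    rcases le_or_gt 0 z with hz | hz
    · have hb1 : |z| * Q ≤ (2 / c) * Real.exp (-(c / 2) * z) := by
        have h1 : z ≤ (2 / c) * Real.exp (c / 2 * z) := by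
          have := aux_le_exp (s := c / 2) (t := z) (by positivity)
          rwa [show ((c:ℝ)/2)⁻¹ = 2 / c by field_simp] at this
        have h2 : Q ≤ Real.exp (-c * z) := hQ1 z hz
        calc |z| * Q ≤ ((2 / c) * Real.exp (c / 2 * z)) * Real.exp (-c * z) := by
              rw [abs_of_nonneg hz]
              exact mul_le_mul h1 h2 (hQpos z).le (by positivity)
          _ = (2 / c) * Real.exp (-(c / 2) * z) := by
              rw [mul_assoc, ← Real.exp_add]; ring_nf
      have hb2 : β * |c * z + 2| * Q / (c * (c ^ 2 * Real.exp (c * z) + a))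
          ≤ (2 * β / c ^ 3) * Real.exp (-(c / 2) * z) := by
        have hnum : β * |c * z + 2| * Q ≤ β * (2 * Real.exp (c / 2 * z)) * Real.exp (-c * z) := by
          have h4 : |c * z + 2| = c * z + 2 := abs_of_nonneg (by nlinarith)
          rw [h4]
          refine mul_le_mul (mul_le_mul_of_nonneg_left (hlin1 z hz) hβ0.le) (hQ1 z hz)
            (hQpos z).le (by positivity)
        calc β * |c * z + 2| * Q / (c * (c ^ 2 * Real.exp (c * z) + a))
            ≤ β * (2 * Real.exp (c / 2 * z)) * Real.exp (-c * z) / c ^ 3 :=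
              div_le_div₀ (by positivity) hnum (by positivity) (hD1 z hz)
          _ = (2 * β / c ^ 3) * Real.exp (-(c / 2) * z) := by
              have he : Real.exp (c / 2 * z) * Real.exp (-c * z) = Real.exp (-(c / 2) * z) := by
                rw [← Real.exp_add]; ring_nf
              rw [show β * (2 * Real.exp (c / 2 * z)) * Real.exp (-c * z) / c ^ 3
                = 2 * β / c ^ 3 * (Real.exp (c / 2 * z) * Real.exp (-c * z)) by ring, he]
      have hexpmono : Real.exp (-(c / 2) * z) ≤ Real.exp (-δ * |z|) := by
        refine Real.exp_le_exp.2 ?_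
        rw [abs_of_nonneg hz]; nlinarith
      calc |wc z| ≤ |z| * Q + β * |c * z + 2| * Q / (c * (c ^ 2 * Real.exp (c * z) + a)) := htri
        _ ≤ (2 / c) * Real.exp (-(c / 2) * z) + (2 * β / c ^ 3) * Real.exp (-(c / 2) * z) :=
            add_le_add hb1 hb2
        _ = (2 / c + 2 * β / c ^ 3) * Real.exp (-(c / 2) * z) := by ring
        _ ≤ (2 / c + 2 * β / c ^ 3) * Real.exp (-δ * |z|) :=
            mul_le_mul_of_nonneg_left hexpmono (by positivity)
        _ ≤ C₂ * Real.exp (-δ * |z|) :=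
            mul_le_mul_of_nonneg_right (le_max_left _ _) (Real.exp_pos _).le
    · have hexpmono : Real.exp (s * z) ≤ Real.exp (-δ * |z|) := by
        refine Real.exp_le_exp.2 ?_
        rw [abs_of_neg hz]; nlinarith
      have hb1 : |z| * Q ≤ (K ^ β / s) * Real.exp (s * z) := by
        have h1 : -z ≤ s⁻¹ * Real.exp (s * (-z)) := aux_le_exp hspos
        calc |z| * Q ≤ (s⁻¹ * Real.exp (s * (-z))) * (K ^ β * Real.exp (2 * s * z)) := by
              rw [abs_of_neg hz]
              exact mul_le_mul h1 (hQ2 z) (hQpos z).le (by positivity)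
          _ = (K ^ β / s) * Real.exp (s * z) := by
              rw [show (s⁻¹ * Real.exp (s * (-z))) * (K ^ β * Real.exp (2 * s * z))
                = (K ^ β / s) * (Real.exp (s * (-z)) * Real.exp (2 * s * z)) by
                  rw [div_eq_mul_inv]; ring]
              rw [← Real.exp_add]
              ring_nf
      have hb2 : β * |c * z + 2| * Q / (c * (c ^ 2 * Real.exp (c * z) + a))
          ≤ ((2 + c / s) * β * K ^ β / (c * a)) * Real.exp (s * z) := by
        have hnum : β * |c * z + 2| * Q
            ≤ β * ((2 + c / s) * Real.exp (s * (-z))) * (K ^ β * Real.exp (2 * s * z)) := by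
          refine mul_le_mul (mul_le_mul_of_nonneg_left (hlin2 z hz) hβ0.le) (hQ2 z)
            (hQpos z).le (by positivity)
        calc β * |c * z + 2| * Q / (c * (c ^ 2 * Real.exp (c * z) + a))
            ≤ β * ((2 + c / s) * Real.exp (s * (-z))) * (K ^ β * Real.exp (2 * s * z)) / (c * a) :=
              div_le_div₀ (by positivity) hnum (by positivity) (hD2 z)
          _ = ((2 + c / s) * β * K ^ β / (c * a))
              * (Real.exp (s * (-z)) * Real.exp (2 * s * z)) := by ring
          _ = ((2 + c / s) * β * K ^ β / (c * a)) * Real.exp (s * z) := by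
              rw [← Real.exp_add]; ring_nf
      calc |wc z| ≤ |z| * Q + β * |c * z + 2| * Q / (c * (c ^ 2 * Real.exp (c * z) + a)) := htri
        _ ≤ (K ^ β / s) * Real.exp (s * z)
            + ((2 + c / s) * β * K ^ β / (c * a)) * Real.exp (s * z) := add_le_add hb1 hb2
        _ = (K ^ β / s + (2 + c / s) * β * K ^ β / (c * a)) * Real.exp (s * z) := by ring
        _ ≤ (K ^ β / s + (2 + c / s) * β * K ^ β / (c * a)) * Real.exp (-δ * |z|) :=
            mul_le_mul_of_nonneg_left hexpmono (by positivity)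
        _ ≤ C₂ * Real.exp (-δ * |z|) :=
            mul_le_mul_of_nonneg_right (le_max_right _ _) (Real.exp_pos _).le
  have hwccont : Continuous wc := by
    have : wc = fun z => -z * Real.exp (-c * z) * u₀ z ^ β
        + β * Real.exp (-c * z) * u₀ z ^ (β - 1) * uc z := funext hwc
    rw [this]
    have hrp : ∀ p : ℝ, Continuous fun z => u₀ z ^ p := fun p =>
      Continuous.rpow_const hu0cont fun z => Or.inl (hu0pos z).ne'
    have hexp : Continuous fun z : ℝ => Real.exp (-c * z) :=
      Real.continuous_exp.comp (continuous_const.mul continuous_id)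
    exact ((continuous_neg.mul hexp).mul (hrp β)).add
      (((continuous_const.mul hexp).mul (hrp (β - 1))).mul huccont)
  exact ⟨aux_memL2 huccont hδpos hucb, aux_memL2 hwccont hδpos hwcb⟩
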